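/- (Curvature greedy guarantee) Let L be a finite modular lattice, I ⊆ L a supermatroid of rank k, and f : L → ℝ a monotone bidirectional DR-submodular function with f(⊥) = 0 and curvature c ∈ [0,1], meaning f(X ∨ a) − f(X) ≥ (1 − c) f(a') for all X, admissible a w.r.t. X, and minimal join-irreducible a' ≤ a. Then the greedy algorithm, which at each step joins an admissible join-irreducible a maximizing f(X ∨ a) subject to X ∨ a ∈ I, outputs after k steps a solution X_k with f(X_k) ≥ (1 − c) f(X*) for any X* ∈ I. -/

import Mathlib

/-- The height of an element: length of a maximal chain from the bottom. -/
noncomputable def ht {α : Type*} [Preorder α] (x : α) : ℕ := (Order.height x).toNat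

/-- A join-irreducible `a` is admissible with respect to `X` if `X ⊓ a ⋖ a`. -/
def Admissible {α : Type*} [Lattice α] (X a : α) : Prop := SupIrred a ∧ X ⊓ a ⋖ a

/-- Downward DR-submodularity. -/
def DownwardDR {α : Type*} [Lattice α] (f : α → ℝ) : Prop :=
  ∀ X Y b : α, X ≤ Y → Admissible Y b →
    ∃ b' : α, SupIrred b' ∧ Y ⊔ b' = Y ⊔ b ∧
      ∀ a : α, a ≤ b' → Admissible X a →
        f (Y ⊔ b) - f Y ≤ f (X ⊔ a) - f X

/-- Upward DR-submodularity: downward DR-submodularity on the order dual. -/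
def UpwardDR {α : Type*} [Lattice α] (f : α → ℝ) : Prop :=
  ∀ X Y b : α, Y ≤ X → InfIrred b → b ⋖ Y ⊔ b →
    ∃ b' : α, InfIrred b' ∧ Y ⊓ b' = Y ⊓ b ∧
      ∀ a : α, b' ≤ a → InfIrred a → a ⋖ X ⊔ a →
        f (Y ⊓ b) - f Y ≤ f (X ⊓ a) - f X

section Aux
variable {α : Type*} [Lattice α] [Fintype α]

lemma height_lt_top' (x : α) : Order.height x < ⊤ := by
  refine lt_of_le_of_lt (Order.height_le fun p _ => ?_) (ENat.coe_lt_top (Fintype.card α))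
  exact_mod_cast p.length_lt_card.le

lemma ht_mono {x y : α} (h : x ≤ y) : ht x ≤ ht y :=
  ENat.toNat_le_toNat (Order.height_mono h) (height_lt_top' y).ne

lemma ht_lt {x y : α} (h : x < y) : ht x < ht y := by
  have h1 := Order.height_strictMono h (height_lt_top' x)
  have h2 := ENat.coe_toNat (height_lt_top' y).ne
  have h3 := ENat.coe_toNat (height_lt_top' x).ne
  rw [← h2, ← h3] at h1
  exact_mod_cast h1

lemma eq_of_le_of_ht_le {x y : α} (h : x ≤ y) (h2 : ht y ≤ ht x) : x = y := by
  rcases h.lt_or_eq with h3 | h3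
  · exact absurd (ht_lt h3) (by omega)
  · exact h3

lemma exists_covBy_le' {y b : α} (h : y < b) : ∃ x, y ≤ x ∧ x ⋖ b := by
  obtain ⟨x, hyx, hmax⟩ := Finite.exists_le_maximal (p := fun w => w < b) h
  exact ⟨x, hyx, hmax.prop, fun z h1 h2 => absurd (hmax.le_of_ge h2 h1.le) (not_le_of_gt h1)⟩

lemma height_covBy' [IsModularLattice α] {a b : α} (h : a ⋖ b) :
    Order.height b = Order.height a + 1 := by
  suffices H : ∀ (n : ℕ) (a b : α), (Order.height b).toNat ≤ n → a ⋖ b →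
      Order.height b = Order.height a + 1 from H (Order.height b).toNat a b le_rfl h
  intro n
  induction n with
  | zero =>
    intro a b hb hab
    have hb0 : Order.height b = 0 := by
      have h2 := ENat.coe_toNat (height_lt_top' b).ne
      rw [← h2]
      exact_mod_cast Nat.le_zero.mp hb
    exact absurd (Order.height_eq_zero.mp hb0 hab.lt.le) (not_le_of_gt hab.lt)
  | succ n IH =>
    intro a b hb hab
    have key : ∀ x, x ⋖ b → Order.height x = Order.height a := by
      intro x hx
      rcases eq_or_ne x a with rfl | hxa
      · rfl
      · have hle : x ⊔ a ≤ b := sup_le hx.lt.le hab.lt.le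
        have hsup : x ⊔ a = b := by
          rcases hle.lt_or_eq with h1 | h1
          · have hax : a ≤ x := by
              by_contra h2
              exact hx.2 (left_lt_sup.mpr h2) h1
            exact absurd hx.lt (hab.2 (lt_of_le_of_ne hax (Ne.symm hxa)))
          · exact h1
        have h1 : x ⊓ a ⋖ a := inf_covBy_of_covBy_sup_left (hsup ▸ hx)
        have h2 : x ⊓ a ⋖ x := by
          have h3 : a ⋖ a ⊔ x := by rw [sup_comm, hsup]; exact hab
          have := inf_covBy_of_covBy_sup_left h3
          rwa [inf_comm] at this
        have hxn : (Order.height x).toNat ≤ n := by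
          have := ht_lt hx.lt; unfold ht at this; omega
        have han : (Order.height a).toNat ≤ n := by
          have := ht_lt hab.lt; unfold ht at this; omega
        rw [IH (x ⊓ a) x hxn h2, IH (x ⊓ a) a han h1]
    have hge : Order.height a + 1 ≤ Order.height b := by
      rw [ENat.add_one_le_iff (height_lt_top' a).ne]
      exact Order.height_strictMono hab.lt (height_lt_top' a)
    have hle : Order.height b ≤ Order.height a + 1 := by
      have ha' := ENat.coe_toNat (height_lt_top' a).ne
      rw [← ha', show ((Order.height a).toNat : ℕ∞) + 1 =
        (((Order.height a).toNat + 1 : ℕ) : ℕ∞) by push_cast; rfl, Order.height_le_coe_iff]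
      intro y hy
      obtain ⟨x, hyx, hx⟩ := exists_covBy_le' hy
      have h5 : Order.height y ≤ Order.height a := (Order.height_mono hyx).trans (key x hx).le
      refine lt_of_le_of_lt h5 ?_
      rw [← ha']
      exact_mod_cast Nat.lt_succ_self _
    exact le_antisymm hle hge

lemma ht_covBy [IsModularLattice α] {a b : α} (h : a ⋖ b) : ht b = ht a + 1 := by
  have h1 := height_covBy' h
  have ha := ENat.coe_toNat (height_lt_top' a).ne
  unfold ht
  rw [h1, ENat.toNat_add (height_lt_top' a).ne (by simp)]
  rfl

lemma ht_bot' [OrderBot α] : ht (⊥ : α) = 0 := by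
  unfold ht
  rw [Order.height_eq_zero.mpr isMin_bot]
  rfl

lemma exists_admissible_le [OrderBot α] {X t : α} (h : ¬ t ≤ X) :
    ∃ s, s ≤ t ∧ Admissible X s := by
  obtain ⟨s, hst, hmin⟩ := exists_minimal_le_of_wellFoundedLT (fun w => w ≤ t ∧ ¬ w ≤ X) _ ⟨le_rfl, h⟩
  obtain ⟨⟨hst', hsX⟩, hminp⟩ := hmin
  have key : ∀ w, w < s → w ≤ X := by
    intro w hw
    by_contra h2
    exact absurd (hminp ⟨hw.le.trans hst', h2⟩ hw.le) (not_le_of_gt hw)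
  refine ⟨s, hst', ⟨⟨?_, ?_⟩, ?_, ?_⟩⟩
  · intro h2
    exact hsX ((h2 bot_le).trans bot_le)
  · intro b c hbc
    by_contra h2
    push_neg at h2
    have hb : b < s := lt_of_le_of_ne (hbc ▸ le_sup_left) h2.1
    have hc : c < s := lt_of_le_of_ne (hbc ▸ le_sup_right) h2.2
    exact hsX (hbc ▸ sup_le (key b hb) (key c hc))
  · exact lt_of_le_of_ne inf_le_right (fun h2 => hsX (h2 ▸ inf_le_left))
  · intro w h1 h2
    exact absurd (le_inf (key w h2) h2.le) (not_le_of_gt h1)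

lemma exists_minimal_supIrred [OrderBot α] {t : α} (htt : SupIrred t) :
    ∃ o, Minimal (fun z => SupIrred z ∧ z ≤ t) o ∧ Admissible ⊥ o := by
  obtain ⟨o, hot, hmin⟩ := exists_minimal_le_of_wellFoundedLT (fun z => SupIrred z ∧ z ≤ t) _
    ⟨htt, le_rfl⟩
  refine ⟨o, hmin, hmin.prop.1, ?_⟩
  rw [bot_inf_eq]
  refine ⟨bot_lt_iff_ne_bot.mpr (fun h2 => hmin.prop.1.1 (h2 ▸ isMin_bot)), ?_⟩
  intro w h1 h2
  obtain ⟨u, huw, humin⟩ := exists_minimal_le_of_wellFoundedLT (fun v => ⊥ < v ∧ v ≤ w) _ ⟨h1, le_rfl⟩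
  have hatom : ∀ v, v < u → v = ⊥ := by
    intro v hv
    by_contra h3
    exact absurd (humin.2 ⟨bot_lt_iff_ne_bot.mpr h3, hv.le.trans huw⟩ hv.le) (not_le_of_gt hv)
  have huirr : SupIrred u := by
    refine ⟨fun h3 => absurd (h3 humin.prop.1.le) (not_le_of_gt humin.prop.1), ?_⟩
    intro b c hbc
    by_contra h3
    push_neg at h3
    have hb := hatom b (lt_of_le_of_ne (hbc ▸ le_sup_left) h3.1)
    have hc := hatom c (lt_of_le_of_ne (hbc ▸ le_sup_right) h3.2)
    rw [hb, hc, sup_idem] at hbc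
    exact absurd hbc (ne_of_lt humin.prop.1)
  have hut : u ≤ t := (huw.trans h2.le).trans hmin.prop.2
  have := hmin.2 ⟨huirr, hut⟩ (huw.trans h2.le)
  exact absurd (lt_of_le_of_lt huw h2) (not_lt_of_ge this)
end Aux

/-- Greedy guarantee under curvature: the greedy algorithm on a rank-`k` modular
supermatroid achieves a `(1 - c)`-approximation for a monotone bidirectional
DR-submodular function with curvature `c`. -/
theorem greedy_curvature_guarantee {α : Type*} [Lattice α] [Fintype α]
    [BoundedOrder α] [IsModularLattice α]
    (𝓘 : Set α) (hne : 𝓘.Nonempty) (hideal : IsLowerSet 𝓘)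
    (hH2 : ∀ X I₁ I₂ : α, Maximal (fun J => J ∈ 𝓘 ∧ J ≤ X) I₁ →
        Maximal (fun J => J ∈ 𝓘 ∧ J ≤ X) I₂ → ht I₁ = ht I₂)
    (k : ℕ) (hrank : ∀ B : α, Maximal (· ∈ 𝓘) B → ht B = k)
    (f : α → ℝ) (hmono : Monotone f) (hbot : f ⊥ = 0)
    (hdown : DownwardDR f) (hup : UpwardDR f)
    (c : ℝ) (hc0 : 0 ≤ c) (hc1 : c ≤ 1)
    (hcurv : ∀ X a a' : α, Admissible X a →
        Minimal (fun z => SupIrred z ∧ z ≤ a) a' →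
        (1 - c) * f a' ≤ f (X ⊔ a) - f X)
    (X : ℕ → α) (hX0 : X 0 = ⊥)
    (hgreedy : ∀ i < k, ∃ a : α, Admissible (X i) a ∧ X i ⊔ a ∈ 𝓘 ∧
        X (i + 1) = X i ⊔ a ∧
        ∀ b : α, Admissible (X i) b → X i ⊔ b ∈ 𝓘 → f (X i ⊔ b) ≤ f (X (i + 1))) :
    ∀ Xstar ∈ 𝓘, (1 - c) * f Xstar ≤ f (X k) := by
  intro Xstar hXstar
  have ht0 : (0:ℝ) ≤ 1 - c := by linarith
  obtain ⟨Y0, hXY0, hY0max⟩ := Finite.exists_le_maximal hXstar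
  have hY0mem : Y0 ∈ 𝓘 := hY0max.prop
  have hY0ht : ht Y0 = k := hrank Y0 hY0max
  have key : ∀ i, i ≤ k → ∃ Y, (Y ∈ 𝓘 ∧ X i ≤ Y ∧ ht Y = k) ∧
      (1 - c) * (f Y0 - f Y) ≤ c * f (X i) := by
    intro i
    induction i with
    | zero =>
      intro _
      exact ⟨Y0, ⟨hY0mem, by rw [hX0]; exact bot_le, hY0ht⟩, by rw [hX0, hbot]; simp⟩
    | succ i IH =>
      intro hik
      have hi : i < k := Nat.lt_of_lt_of_le (Nat.lt_succ_self i) hik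
      obtain ⟨Y, ⟨hYI, hXiY, hYht⟩, hbound⟩ := IH hi.le
      obtain ⟨a, ⟨haIrr, hacov⟩, hfeas, hstep, hopt⟩ := hgreedy i hi
      have hfeas1 : X (i+1) ∈ 𝓘 := hstep ▸ hfeas
      have haX : ¬ a ≤ X i := fun h => hacov.lt.ne (inf_eq_right.mpr h)
      have hXlt : X i < X (i+1) := by rw [hstep]; exact left_lt_sup.mpr haX
      have hXcov : X i ⋖ X (i+1) := by rw [hstep]; exact covBy_sup_of_inf_covBy_right hacov
      have hfX : f (X i) ≤ f (X (i+1)) := hmono hXlt.le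
      have hΔ0 : (0:ℝ) ≤ f (X (i+1)) - f (X i) := sub_nonneg.mpr hfX
      by_cases hay : a ≤ Y
      · refine ⟨Y, ⟨hYI, by rw [hstep]; exact sup_le hXiY hay, hYht⟩, ?_⟩
        nlinarith only [hbound, hfX, hc0]
      · have h4 : Y ⊓ a < a := lt_of_le_of_ne inf_le_right (fun h => hay (h ▸ inf_le_left))
        have h5 : X i ⊓ a ≤ Y ⊓ a := inf_le_inf_right a hXiY
        have hYa_inf : Y ⊓ a = X i ⊓ a :=
          ((h5.lt_or_eq).resolve_left (fun h6 => hacov.2 h6 h4)).symm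
        have hYacov : Y ⊓ a ⋖ a := hYa_inf ▸ hacov
        have hYcovW : Y ⋖ Y ⊔ a := covBy_sup_of_inf_covBy_right hYacov
        have hWht : ht (Y ⊔ a) = k + 1 := by rw [ht_covBy hYcovW, hYht]
        have hWnI : Y ⊔ a ∉ 𝓘 := by
          intro h2
          obtain ⟨B, hWB, hBmax⟩ := Finite.exists_le_maximal h2
          have h6 := hrank B hBmax
          have h7 := ht_mono hWB
          omega
        have hXi1W : X (i+1) ≤ Y ⊔ a := by
          rw [hstep]; exact sup_le (hXiY.trans le_sup_left) le_sup_right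
        obtain ⟨Y', hXi1Y', hY'max⟩ :=
          Finite.exists_le_maximal (p := fun J => J ∈ 𝓘 ∧ J ≤ Y ⊔ a) ⟨hfeas1, hXi1W⟩
        have hY'I : Y' ∈ 𝓘 := hY'max.prop.1
        have hY'W : Y' ≤ Y ⊔ a := hY'max.prop.2
        have hYmaxW : Maximal (fun J => J ∈ 𝓘 ∧ J ≤ Y ⊔ a) Y := by
          refine ⟨⟨hYI, le_sup_left⟩, fun Z hZ hYZ => ?_⟩
          rcases hYZ.lt_or_eq with h2 | h2
          · exact absurd (((hZ.2).lt_or_eq.resolve_left (hYcovW.2 h2)) ▸ hZ.1) hWnI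
          · exact h2.ge
        have hY'ht : ht Y' = k := by rw [hH2 (Y ⊔ a) Y' Y hY'max hYmaxW, hYht]
        have hY'ltW : Y' < Y ⊔ a := lt_of_le_of_ne hY'W (fun h => hWnI (h ▸ hY'I))
        have hY'cov : Y' ⋖ Y ⊔ a := by
          refine ⟨hY'ltW, fun Z h1 h2 => ?_⟩
          have h8 := ht_lt h1
          have h9 := ht_lt h2
          omega
        have haXi1 : a ≤ X (i+1) := by rw [hstep]; exact le_sup_right
        have hY'nY : ¬ Y' ≤ Y := fun h => hay ((haXi1.trans hXi1Y').trans h)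
        have hYY'W : Y ⊔ Y' = Y ⊔ a := by
          have h1 : Y < Y ⊔ Y' := left_lt_sup.mpr hY'nY
          have h2 : Y ⊔ Y' ≤ Y ⊔ a := sup_le le_sup_left hY'W
          exact h2.lt_or_eq.resolve_left (hYcovW.2 h1)
        have hmY : Y ⊓ Y' ⋖ Y := by
          have h1 : Y' ⋖ Y' ⊔ Y := by rw [sup_comm, hYY'W]; exact hY'cov
          have h2 := inf_covBy_of_covBy_sup_left h1
          rwa [inf_comm] at h2
        have hmY' : Y ⊓ Y' ⋖ Y' := by
          have h1 : Y ⋖ Y ⊔ Y' := by rw [hYY'W]; exact hYcovW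
          exact inf_covBy_of_covBy_sup_left h1
        have hXm : X i ≤ Y ⊓ Y' := le_inf hXiY (hXlt.le.trans hXi1Y')
        obtain ⟨z, hzY, hzadm⟩ :=
          exists_admissible_le (X := Y ⊓ Y') (t := Y) (not_le_of_gt hmY.lt)
        have hznm : ¬ z ≤ Y ⊓ Y' := fun h => hzadm.2.lt.ne (inf_eq_right.mpr h)
        have hmz : Y ⊓ Y' ⊔ z = Y := by
          have h1 : Y ⊓ Y' < Y ⊓ Y' ⊔ z := left_lt_sup.mpr hznm
          have h2 : Y ⊓ Y' ⊔ z ≤ Y := sup_le inf_le_left hzY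
          exact h2.lt_or_eq.resolve_left (hmY.2 h1)
        obtain ⟨z', hz'irr, hz'sup, hz'bound⟩ := hdown (X i) (Y ⊓ Y') z hXm hzadm
        have hz'Y : z' ≤ Y := by
          have h1 : z' ≤ Y ⊓ Y' ⊔ z' := le_sup_right
          rwa [hz'sup, hmz] at h1
        have hz'nX : ¬ z' ≤ X i := by
          intro h2
          have h3 : Y ⊓ Y' ⊔ z' = Y ⊓ Y' := sup_eq_left.mpr (h2.trans hXm)
          rw [hz'sup, hmz] at h3
          exact hmY.lt.ne' h3
        obtain ⟨a₁, ha₁z', ha₁adm⟩ := exists_admissible_le hz'nX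
        have hE1 : f Y - f (Y ⊓ Y') ≤ f (X (i+1)) - f (X i) := by
          have h1 := hz'bound a₁ ha₁z' ha₁adm
          rw [hmz] at h1
          have hfeasa1 : X i ⊔ a₁ ∈ 𝓘 := hideal (sup_le hXiY (ha₁z'.trans hz'Y)) hYI
          have h2 := hopt a₁ ha₁adm hfeasa1
          linarith only [h1, h2]
        obtain ⟨a'', ha''irr, ha''sup, ha''bound⟩ := hdown ⊥ (X i) a bot_le ⟨haIrr, hacov⟩
        have ha''X : X i ⊔ a'' = X (i+1) := by rw [ha''sup, ← hstep]
        have ha''nX : ¬ a'' ≤ X i := fun h => hXlt.ne (by rw [← ha''X, sup_eq_left.mpr h])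
        have hXa''cov : X i ⊓ a'' ⋖ a'' := by
          have h1 : X i ⋖ X i ⊔ a'' := by rw [ha''X]; exact hXcov
          exact inf_covBy_of_covBy_sup_left h1
        have ha''admX : Admissible (X i) a'' := ⟨ha''irr, hXa''cov⟩
        have ha''Y' : a'' ≤ Y' := (le_sup_right.trans ha''X.le).trans hXi1Y'
        have ha''nm : ¬ a'' ≤ Y ⊓ Y' := by
          intro h2
          refine hay (haXi1.trans ?_)
          rw [← ha''X]
          exact sup_le hXiY (h2.trans inf_le_left)
        have hma''_inf : (Y ⊓ Y') ⊓ a'' = X i ⊓ a'' := by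
          have ha4 : (Y ⊓ Y') ⊓ a'' < a'' :=
            lt_of_le_of_ne inf_le_right (fun h => ha''nm (h ▸ inf_le_left))
          have ha5 : X i ⊓ a'' ≤ (Y ⊓ Y') ⊓ a'' := inf_le_inf_right _ hXm
          exact ((ha5.lt_or_eq).resolve_left (fun h6 => hXa''cov.2 h6 ha4)).symm
        have ha''admm : Admissible (Y ⊓ Y') a'' := ⟨ha''irr, hma''_inf ▸ hXa''cov⟩
        have hma''Y' : Y ⊓ Y' ⊔ a'' = Y' := by
          have h1 : Y ⊓ Y' < Y ⊓ Y' ⊔ a'' := left_lt_sup.mpr ha''nm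
          have h2 : Y ⊓ Y' ⊔ a'' ≤ Y' := sup_le inf_le_right ha''Y'
          exact h2.lt_or_eq.resolve_left (hmY'.2 h1)
        obtain ⟨o, homin, hoadm⟩ := exists_minimal_supIrred ha''irr
        have hΔo : f (X (i+1)) - f (X i) ≤ f o := by
          have h1 := ha''bound o homin.prop.2 hoadm
          rw [bot_sup_eq, hbot, ← hstep] at h1
          linarith only [h1]
        have hcurv1 : (1-c) * f o ≤ f (X (i+1)) - f (X i) := by
          have h1 := hcurv (X i) a'' o ha''admX homin
          rwa [ha''X] at h1
        have hcurv2 : (1-c) * f o ≤ f Y' - f (Y ⊓ Y') := by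
          have h1 := hcurv (Y ⊓ Y') a'' o ha''admm homin
          rwa [hma''Y'] at h1
        refine ⟨Y', ⟨hY'I, hXi1Y', hY'ht⟩, ?_⟩
        have hA : (1-c) * (f Y - f Y') ≤ c * (f (X (i+1)) - f (X i)) := by
          nlinarith only [mul_le_mul_of_nonneg_left hE1 ht0,
            mul_le_mul_of_nonneg_left hcurv2 ht0,
            mul_le_mul_of_nonneg_left hΔo (mul_nonneg ht0 ht0),
            mul_nonneg (mul_nonneg hc0 hc0) hΔ0]
        nlinarith only [hbound, hA, mul_le_mul_of_nonneg_left hfX hc0]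
  obtain ⟨Y, ⟨hYI, hXkY, hYht⟩, hbound⟩ := key k le_rfl
  have hXkht : ht (X k) = k := by
    have H : ∀ i, i ≤ k → ht (X i) = i := by
      intro i
      induction i with
      | zero => intro _; rw [hX0]; exact ht_bot'
      | succ i IH =>
        intro hik
        have hi : i < k := Nat.lt_of_lt_of_le (Nat.lt_succ_self i) hik
        obtain ⟨a, ⟨haIrr, hacov⟩, hfeas, hstep, hopt⟩ := hgreedy i hi
        have hXcov : X i ⋖ X (i+1) := by rw [hstep]; exact covBy_sup_of_inf_covBy_right hacov
        rw [ht_covBy hXcov, IH hi.le]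
    exact H k le_rfl
  have hYXk : Y = X k := (eq_of_le_of_ht_le hXkY (by omega)).symm
  rw [hYXk] at hbound
  have h1 : f Xstar ≤ f Y0 := hmono hXY0
  nlinarith only [hbound, mul_le_mul_of_nonneg_left h1 ht0]
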